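/- Let $Z = K[X]/(X^k)$ with $k \ge 2$, $\varepsilon$ the class of $X$, $B$ a $Z$-algebra and $M$ a $B$-module which is free of finite rank as a $Z$-module. Then $M/\varepsilon M$ and $\varepsilon^{k-1} M$ are isomorphic as $B/(\varepsilon B)$-modules. -/

import Mathlib

open Polynomial

set_option synthInstance.maxHeartbeats 1000000
set_option maxHeartbeats 1000000

/-- Let `Z = K[X]/(X^k)` (`k ≥ 2`), `ε` the class of `X`, `B` a
`Z`-algebra and `M` a `B`-module which is free of finite rank as a `Z`-module.
Then `M/εM` and `ε^(k-1)M` are isomorphic as `B`-modules (both are annihilated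
by `ε`, so this is an isomorphism of `B/(εB)`-modules). -/
theorem stmt_6 (K : Type*) [Field K] (k : ℕ) (hk : 2 ≤ k)
    (ε : K[X] ⧸ Ideal.span {(X : K[X]) ^ k})
    (hε : ε = Ideal.Quotient.mk (Ideal.span {(X : K[X]) ^ k}) X)
    (B : Type*) [Ring B] [Algebra (K[X] ⧸ Ideal.span {(X : K[X]) ^ k}) B]
    (M : Type*) [AddCommGroup M] [Module B M]
    [Module (K[X] ⧸ Ideal.span {(X : K[X]) ^ k}) M]
    [IsScalarTower (K[X] ⧸ Ideal.span {(X : K[X]) ^ k}) B M]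
    (n : ℕ) (basis : Module.Basis (Fin n) (K[X] ⧸ Ideal.span {(X : K[X]) ^ k}) M)
    (εM εk1M : Submodule B M)
    (hεM : εM = Submodule.span B {m : M | ∃ x : M, m = ε • x})
    (hεk1M : εk1M = Submodule.span B {m : M | ∃ x : M, m = ε ^ (k - 1) • x}) :
    Nonempty ((M ⧸ εM) ≃ₗ[B] εk1M) := by
  subst hεM hεk1M hε
  set ε : K[X] ⧸ Ideal.span {(X : K[X]) ^ k} := Ideal.Quotient.mk (Ideal.span {(X : K[X]) ^ k}) X with hε
  -- ε^k = 0
  have hεk : ε ^ k = 0 := by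
    rw [hε, ← map_pow, Ideal.Quotient.eq_zero_iff_mem]
    exact Ideal.subset_span rfl
  -- cancellation: ε^(k-1) * c = 0 → c ∈ (ε)
  have hcancel : ∀ c : K[X] ⧸ Ideal.span {(X : K[X]) ^ k}, ε ^ (k - 1) * c = 0 → ∃ d : K[X] ⧸ Ideal.span {(X : K[X]) ^ k}, c = ε * d := by
    intro c hc
    obtain ⟨p, rfl⟩ := Ideal.Quotient.mk_surjective c
    rw [hε, ← map_pow, ← map_mul, Ideal.Quotient.eq_zero_iff_mem,
      Ideal.mem_span_singleton] at hc
    obtain ⟨q, hq⟩ := hc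
    have hsplit : (X : K[X]) ^ k = X ^ (k - 1) * X := by
      rw [← pow_succ]; congr 1; omega
    rw [hsplit] at hq
    have hx : (X : K[X]) ^ (k - 1) ≠ 0 := pow_ne_zero _ X_ne_zero
    have hpq : p = X * q := by
      apply mul_left_cancel₀ hx
      rw [hq]; ring
    exact ⟨Ideal.Quotient.mk _ q, by rw [hpq, map_mul, hε]⟩
  -- scalar commutation
  have hcomm : ∀ (z : K[X] ⧸ Ideal.span {(X : K[X]) ^ k}) (b : B) (m : M), z • (b • m) = b • (z • m) := by
    intro z b m
    rw [← smul_assoc, Algebra.smul_def, Algebra.commutes, mul_smul, algebraMap_smul]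
  -- the linear map m ↦ ε^(k-1) • m
  let f : M →ₗ[B] M :=
    { toFun := fun m => ε ^ (k - 1) • m
      map_add' := fun x y => smul_add _ _ _
      map_smul' := fun b m => hcomm _ b m }
  have hrange : LinearMap.range f = Submodule.span B {m : M | ∃ x : M, m = ε ^ (k - 1) • x} := by
    apply le_antisymm
    · rintro m ⟨x, rfl⟩
      exact Submodule.subset_span ⟨x, rfl⟩
    · rw [Submodule.span_le]
      rintro m ⟨x, rfl⟩
      exact ⟨x, rfl⟩
  have hker : LinearMap.ker f = Submodule.span B {m : M | ∃ x : M, m = ε • x} := by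
    apply le_antisymm
    · intro m hm
      have hm0 : ε ^ (k - 1) • m = 0 := hm
      have hcoord : ∀ i : Fin n, ε ^ (k - 1) * basis.repr m i = 0 := by
        intro i
        have := congrArg (fun x => basis.repr x i) hm0
        simp only [map_smul, Finsupp.smul_apply, smul_eq_mul, map_zero,
          Finsupp.coe_zero, Pi.zero_apply] at this
        exact this
      choose d hd using fun i => hcancel _ (hcoord i)
      refine Submodule.subset_span ⟨∑ i, d i • basis i, ?_⟩
      have := basis.sum_repr m
      rw [Finset.smul_sum]
      simp_rw [smul_smul, ← hd]
      exact this.symm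
    · rw [Submodule.span_le]
      rintro m ⟨x, rfl⟩
      have : ε ^ (k - 1) • ε • x = 0 := by
        rw [smul_smul, ← pow_succ]
        have : k - 1 + 1 = k := by omega
        rw [this, hεk]
        exact zero_smul (K[X] ⧸ Ideal.span {(X : K[X]) ^ k}) x
      exact this
  exact ⟨(Submodule.quotEquivOfEq _ _ hker.symm).trans
    ((f.quotKerEquivRange).trans (LinearEquiv.ofEq _ _ hrange))⟩
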